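/- If f(z) = Σ a_n z^n is analytic in 𝔻 with |f(z)| ≤ 1, then |a_n| ≤ 1 - |a_0|^2 for every n ≥ 1. -/

import Mathlib

open Metric Complex Finset Real


theorem psLemma (c : ℕ → ℂ) (g : ℂ → ℂ)
    (hc : ∀ w ∈ Metric.ball (0 : ℂ) 1, HasSum (fun j => c j * w ^ j) (g w)) :
    DifferentiableOn ℂ g (Metric.ball (0 : ℂ) 1) ∧ g 0 = c 0 ∧ deriv g 0 = c 1 := by
  set p : FormalMultilinearSeries ℂ ℂ ℂ :=
    fun j => ContinuousMultilinearMap.mkPiRing ℂ (Fin j) (c j) with hp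
  have hpn : ∀ j (y : ℂ), (p j fun _ => y) = c j * y ^ j := by
    intro j y
    simp [hp, ContinuousMultilinearMap.mkPiRing_apply, smul_eq_mul, mul_comm]
  have hrad : 1 ≤ p.radius := by
    refine ENNReal.le_of_forall_nnreal_lt fun r hr => ?_
    have hr' : (r : ℝ) < 1 := by exact_mod_cast hr
    have hrb : (((r : ℝ) : ℂ)) ∈ Metric.ball (0 : ℂ) 1 := by
      simp only [mem_ball, dist_zero_right, Complex.norm_real, Real.norm_eq_abs,
        _root_.abs_of_nonneg r.coe_nonneg]
      exact hr'
    have hs := (hc _ hrb).summable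
    refine p.le_radius_of_tendsto (l := 0) ?_
    have h0 := hs.tendsto_atTop_zero
    have := h0.norm
    simp only [norm_zero] at this
    convert this using 2 with j
    rw [hp]
    simp [ContinuousMultilinearMap.norm_mkPiRing, norm_mul, norm_pow, Complex.norm_real,
      Real.norm_eq_abs, _root_.abs_of_nonneg r.coe_nonneg]
  have hball : HasFPowerSeriesOnBall g p 0 1 := by
    refine ⟨hrad, one_pos, fun {y} hy => ?_⟩
    have hy' : y ∈ Metric.ball (0 : ℂ) 1 := by
      rw [EMetric.mem_ball, edist_zero_right] at hy
      simp only [mem_ball, dist_zero_right]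
      rwa [← ofReal_norm_eq_enorm, ENNReal.ofReal_lt_one] at hy
    simpa [hpn] using hc y hy'
  refine ⟨?_, ?_, ?_⟩
  · have := hball.analyticOnNhd.differentiableOn
    have he : Metric.eball (0:ℂ) 1 = Metric.ball (0:ℂ) 1 := by
      simpa using Metric.emetric_ball_nnreal (x := (0:ℂ)) (ε := 1)
    rwa [he] at this
  · have h1 : HasSum (fun j => c j * (0:ℂ) ^ j) (g 0) := hc 0 (by simp)
    have h2 : HasSum (fun j => c j * (0:ℂ) ^ j) (c 0) := by
      convert hasSum_single (f := fun j => c j * (0:ℂ) ^ j) 0 (fun b hb => by simp [zero_pow hb]) using 1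
      simp
    exact h1.unique h2
  · rw [hball.hasFPowerSeriesAt.deriv]
    simp [FormalMultilinearSeries.coeff, hpn]


theorem normSqId (b w : ℂ) :
    Complex.normSq (1 - (starRingEnd ℂ) b * w) - Complex.normSq (w - b)
      = (1 - Complex.normSq b) * (1 - Complex.normSq w) := by
  simp only [Complex.normSq_apply, Complex.sub_re, Complex.sub_im, Complex.mul_re, Complex.mul_im,
    Complex.one_re, Complex.one_im, Complex.conj_re, Complex.conj_im]
  ring

theorem schwarzPick (g : ℂ → ℂ) (hd : DifferentiableOn ℂ g (Metric.ball (0:ℂ) 1))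
    (hb : ∀ z ∈ Metric.ball (0:ℂ) 1, ‖g z‖ ≤ 1) :
    ‖deriv g 0‖ ≤ 1 - ‖g 0‖ ^ 2 := by
  have h01 : (0:ℂ) ∈ Metric.ball (0:ℂ) 1 := by simp
  by_cases hstrict : ∀ z ∈ Metric.ball (0:ℂ) 1, ‖g z‖ < 1
  · set b := g 0 with hbdef
    have hb1 : ‖b‖ < 1 := hstrict 0 h01
    have hbsq : Complex.normSq b < 1 := by
      rw [← Complex.sq_norm]
      exact pow_lt_one₀ (norm_nonneg b)
        (by simpa using hb1) two_ne_zero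
    set c := (starRingEnd ℂ) b with hcdef
    have hden : ∀ z ∈ Metric.ball (0:ℂ) 1, 1 - c * g z ≠ 0 := by
      intro z hz
      have : ‖c * g z‖ < 1 := by
        rw [norm_mul]
        calc ‖c‖ * ‖g z‖ ≤ ‖c‖ * 1 := by
              exact mul_le_mul_of_nonneg_left (hstrict z hz).le (norm_nonneg _)
          _ = ‖b‖ := by simp [hcdef]
          _ < 1 := hb1
      intro h
      have : ‖(1:ℂ)‖ < 1 := by
        have h1 : (1:ℂ) = c * g z := by linear_combination h
        rw [h1]; exact this
      simp at this
    set φ : ℂ → ℂ := fun z => (g z - b) / (1 - c * g z) with hφ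
    have hφd : DifferentiableOn ℂ φ (Metric.ball (0:ℂ) 1) := by
      apply DifferentiableOn.div
      · exact hd.sub (differentiableOn_const b)
      · exact (differentiableOn_const 1).sub ((differentiableOn_const c).mul hd)
      · exact hden
    have hφ0 : φ 0 = 0 := by simp [hφ, hbdef]
    have hmaps : Set.MapsTo φ (Metric.ball (0:ℂ) 1) (Metric.ball (0:ℂ) 1) := by
      intro z hz
      have hw : ‖g z‖ < 1 := hstrict z hz
      have hwsq : Complex.normSq (g z) < 1 := by
        rw [← Complex.sq_norm]
        exact pow_lt_one₀ (norm_nonneg (g z))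
          (by simpa using hw) two_ne_zero
      have key := normSqId b (g z)
      have hlt : Complex.normSq (g z - b) < Complex.normSq (1 - c * g z) := by
        nlinarith
      rw [mem_ball, dist_zero_right, hφ]
      rw [norm_div, div_lt_one (norm_pos_iff.mpr (hden z hz))]
      rw [Complex.norm_def, Complex.norm_def]
      exact Real.sqrt_lt_sqrt (Complex.normSq_nonneg _) hlt
    have hd1 : ‖deriv φ 0‖ ≤ 1 := by
      have := Complex.norm_deriv_le_one_of_mapsTo_ball hφd
        (fun z hz => by rw [hφ0]; exact Metric.ball_subset_closedBall (hmaps hz)) one_pos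
      simpa using this
    -- compute deriv φ 0
    have hgd : HasDerivAt g (deriv g 0) 0 := by
      have := (hd.differentiableAt (Metric.isOpen_ball.mem_nhds h01))
      exact this.hasDerivAt
    have hden0 : 1 - c * b ≠ 0 := by simpa [hbdef] using hden 0 h01
    have hφd0 : HasDerivAt φ (deriv g 0 / (1 - c * b)) 0 := by
      have h1 : HasDerivAt (fun z => g z - b) (deriv g 0) 0 := hgd.sub_const b
      have h2 : HasDerivAt (fun z => 1 - c * g z) (-(c * deriv g 0)) 0 := by
        simpa using (hgd.const_mul c).const_sub 1
      have := h1.div h2 hden0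
      refine this.congr_deriv ?_
      rw [← hbdef]
      field_simp
      ring
    have hderiv : deriv φ 0 = deriv g 0 / (1 - c * b) := hφd0.deriv
    have hcb : (1 : ℂ) - c * b = ((1 - Complex.normSq b : ℝ) : ℂ) := by
      simp [hcdef, Complex.normSq_eq_conj_mul_self]
    have hnorm : ‖(1:ℂ) - c * b‖ = 1 - Complex.normSq b := by
      rw [hcb, Complex.norm_real, Real.norm_eq_abs, abs_of_pos (by linarith)]
    rw [hderiv, norm_div, hnorm, div_le_one (by linarith)] at hd1
    have : ‖b‖ ^ 2 = Complex.normSq b := by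
      rw [Complex.sq_norm]
    rw [this]
    linarith
  · push_neg at hstrict
    obtain ⟨z₀, hz₀, hge⟩ := hstrict
    have heq : ‖g z₀‖ = 1 := le_antisymm (hb z₀ hz₀) hge
    have hmax : IsMaxOn (norm ∘ g) (Metric.ball (0:ℂ) 1) z₀ := by
      intro z hz
      simp only [Function.comp_apply, Set.mem_setOf_eq, heq]
      exact hb z hz
    have hconst : Set.EqOn g (Function.const ℂ (g z₀)) (Metric.ball (0:ℂ) 1) :=
      Complex.eqOn_of_isPreconnected_of_isMaxOn_norm (convex_ball _ _).isPreconnected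
        Metric.isOpen_ball hd hz₀ hmax
    have hg0 : g 0 = g z₀ := hconst h01
    have hder0 : deriv g 0 = 0 := by
      have hev : g =ᶠ[nhds (0:ℂ)] Function.const ℂ (g z₀) :=
        Filter.eventuallyEq_of_mem (Metric.isOpen_ball.mem_nhds h01) hconst
      rw [hev.deriv_eq]
      exact deriv_const _ _
    rw [hder0, hg0, heq]
    norm_num


theorem avgLemma (f : ℂ → ℂ) (a : ℕ → ℂ)
    (hsum : ∀ z ∈ Metric.ball (0 : ℂ) 1, HasSum (fun n => a n * z ^ n) (f z))
    (hb : ∀ z ∈ Metric.ball (0 : ℂ) 1, ‖f z‖ ≤ 1)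
    (n : ℕ) (hn : 1 ≤ n) :
    ∀ w ∈ Metric.ball (0:ℂ) 1, ∃ S : ℂ,
      HasSum (fun j => a (n * j) * w ^ j) S ∧ ‖S‖ ≤ 1 := by
  have hn0 : n ≠ 0 := by omega
  set ω : ℂ := Complex.exp (2 * Real.pi * Complex.I / n) with hω
  have hprim : IsPrimitiveRoot ω n := Complex.isPrimitiveRoot_exp n hn0
  have habsω : ‖ω‖ = 1 := by
    have : ω = Complex.exp (((2 * Real.pi / n : ℝ) : ℂ) * Complex.I) := by
      rw [hω]; push_cast; ring_nf
    rw [this, Complex.norm_exp_ofReal_mul_I]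
  intro w hw
  rw [mem_ball, dist_zero_right] at hw
  -- choose an n-th root z of w
  obtain ⟨z, hzn, hz1⟩ : ∃ z : ℂ, z ^ n = w ∧ ‖z‖ < 1 := by
    rcases eq_or_ne w 0 with rfl | hw0
    · exact ⟨0, by simp [zero_pow hn0], by simp⟩
    · refine ⟨w ^ ((n : ℂ)⁻¹), Complex.cpow_nat_inv_pow w hn0, ?_⟩
      have h1 : ((n:ℂ)⁻¹) = (((n:ℝ)⁻¹ : ℝ) : ℂ) := by push_cast; ring
      rw [h1, Complex.norm_cpow_real]
      apply Real.rpow_lt_one (norm_nonneg w) hw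
      positivity
  have hmem : ∀ k : ℕ, ω ^ k * z ∈ Metric.ball (0:ℂ) 1 := by
    intro k
    rw [mem_ball, dist_zero_right, norm_mul, norm_pow, habsω, one_pow, one_mul]
    exact hz1
  have hS : HasSum (fun m => ∑ k ∈ Finset.range n, a m * (ω ^ k * z) ^ m)
      (∑ k ∈ Finset.range n, f (ω ^ k * z)) :=
    hasSum_sum fun k _ => hsum _ (hmem k)
  have hterm : ∀ m : ℕ, (∑ k ∈ Finset.range n, a m * (ω ^ k * z) ^ m)
      = (if n ∣ m then (n : ℂ) else 0) * (a m * z ^ m) := by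
    intro m
    have h1 : ∀ k, a m * (ω ^ k * z) ^ m = (ω ^ m) ^ k * (a m * z ^ m) := by
      intro k
      rw [mul_pow, ← pow_mul, ← pow_mul, mul_comm k m]
      ring
    simp only [h1, ← Finset.sum_mul]
    congr 1
    by_cases hd : n ∣ m
    · rw [if_pos hd]
      have : ω ^ m = 1 := hprim.pow_eq_one_iff_dvd m |>.mpr hd
      simp [this]
    · rw [if_neg hd]
      have hne : ω ^ m ≠ 1 := fun h => hd (hprim.pow_eq_one_iff_dvd m |>.mp h)
      rw [geom_sum_eq hne]
      have : (ω ^ m) ^ n = 1 := by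
        rw [← pow_mul, mul_comm, pow_mul, hprim.pow_eq_one, one_pow]
      rw [this]
      simp
  rw [funext hterm] at hS
  set S := ∑ k ∈ Finset.range n, f (ω ^ k * z) with hSdef
  have hinj : Function.Injective (fun j : ℕ => n * j) := fun x y h => by
    simpa [hn0] using h
  have hsupp : ∀ m ∉ Set.range (fun j : ℕ => n * j),
      (if n ∣ m then (n : ℂ) else 0) * (a m * z ^ m) = 0 := by
    intro m hm
    have : ¬ n ∣ m := by
      rintro ⟨j, rfl⟩
      exact hm ⟨j, rfl⟩
    simp [this]
  have hS2 : HasSum (fun j => (if n ∣ n * j then (n : ℂ) else 0) * (a (n * j) * z ^ (n * j))) S :=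
    (Function.Injective.hasSum_iff hinj hsupp).mpr hS
  have hS3 : HasSum (fun j => (n : ℂ) * (a (n * j) * w ^ j)) S := by
    refine hS2.congr_fun fun j => ?_
    rw [if_pos ⟨j, rfl⟩, pow_mul, hzn]
  have hS4 : HasSum (fun j => a (n * j) * w ^ j) ((n : ℂ)⁻¹ * S) := by
    have := hS3.mul_left ((n : ℂ)⁻¹)
    refine this.congr_fun fun j => ?_
    rw [← mul_assoc, inv_mul_cancel₀ (by exact_mod_cast hn0), one_mul]
  refine ⟨(n : ℂ)⁻¹ * S, hS4, ?_⟩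
  rw [norm_mul, norm_inv]
  have hSb : ‖S‖ ≤ n := by
    calc ‖S‖ ≤ ∑ k ∈ Finset.range n, ‖f (ω ^ k * z)‖ := norm_sum_le _ _
      _ ≤ ∑ k ∈ Finset.range n, 1 := Finset.sum_le_sum fun k _ => hb _ (hmem k)
      _ = n := by simp
  have hnn : ‖(n : ℂ)‖ = (n : ℝ) := by simp
  rw [hnn, inv_mul_le_iff₀ (by positivity), mul_one]
  exact hSb

/-- If `f(z) = Σ aₙ zⁿ` is analytic on the unit disk with `|f| ≤ 1`,
then `|aₙ| ≤ 1 - |a₀|²` for all `n ≥ 1`. -/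
theorem coeff_bound (f : ℂ → ℂ) (a : ℕ → ℂ)
    (hsum : ∀ z ∈ Metric.ball (0 : ℂ) 1, HasSum (fun n => a n * z ^ n) (f z))
    (hb : ∀ z ∈ Metric.ball (0 : ℂ) 1, ‖f z‖ ≤ 1) :
    ∀ n : ℕ, 1 ≤ n → ‖a n‖ ≤ 1 - ‖a 0‖ ^ 2 := by
  intro n hn
  have havg := avgLemma f a hsum hb n hn
  set g : ℂ → ℂ := fun w => ∑' j, a (n * j) * w ^ j with hgdef
  have hg : ∀ w ∈ Metric.ball (0:ℂ) 1, HasSum (fun j => a (n * j) * w ^ j) (g w) := by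
    intro w hw
    obtain ⟨S, h1, _⟩ := havg w hw
    simpa [hgdef, h1.tsum_eq] using h1
  have hgb : ∀ w ∈ Metric.ball (0:ℂ) 1, ‖g w‖ ≤ 1 := by
    intro w hw
    obtain ⟨S, h1, h2⟩ := havg w hw
    simpa [hgdef, h1.tsum_eq] using h2
  obtain ⟨hdiff, hg0, hg1⟩ := psLemma (fun j => a (n * j)) g hg
  have hfin := schwarzPick g hdiff hgb
  rw [hg1, hg0] at hfin
  simpa using hfin
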